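/- Let Φ: G → Aut(H) be an action of a group G on a group H. A map 𝓑: H → G is a relative Rota-Baxter operator (i.e. 𝓑(a)·𝓑(b) = 𝓑(a · Φ(𝓑(a))b) for all a, b ∈ H) if and only if the graph Gr(𝓑) = {(𝓑(h), h) | h ∈ H} is a subgroup of the semidirect product group G ⋉_Φ H. -/
import Mathlib


/-- A map `𝓑 : H → G` is a relative Rota-Baxter operator with respect to the
action `Φ : G → Aut(H)` iff its graph is a subgroup of the semidirect product
group `G ⋉_Φ H` (realized in Mathlib as `H ⋊[Φ] G`, whose multiplication is
`(h₁,g₁)(h₂,g₂) = (h₁ · Φ(g₁)h₂, g₁g₂)`). -/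
theorem graph_subgroup_iff_relative_rota_baxter
    {G H : Type*} [Group G] [Group H] (Φ : G →* MulAut H) (𝓑 : H → G) :
    (∀ a b : H, 𝓑 a * 𝓑 b = 𝓑 (a * Φ (𝓑 a) b)) ↔
      ∃ S : Subgroup (H ⋊[Φ] G),
        (S : Set (H ⋊[Φ] G)) = Set.range (fun h : H => (⟨h, 𝓑 h⟩ : H ⋊[Φ] G)) := by
  constructor
  · intro hRB
    have h1 : 𝓑 1 = 1 := by
      have := hRB 1 1
      simpa using this.symm
    refine ⟨{
      carrier := Set.range (fun h : H => (⟨h, 𝓑 h⟩ : H ⋊[Φ] G))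
      one_mem' := ⟨1, by ext <;> simp [h1]⟩
      mul_mem' := ?_
      inv_mem' := ?_ }, rfl⟩
    · rintro x y ⟨a, rfl⟩ ⟨b, rfl⟩
      exact ⟨a * Φ (𝓑 a) b, by ext <;> simp [← hRB a b]⟩
    · rintro x ⟨a, rfl⟩
      refine ⟨(Φ (𝓑 a))⁻¹ a⁻¹, ?_⟩
      have key : 𝓑 a * 𝓑 ((Φ (𝓑 a))⁻¹ a⁻¹) = 1 := by
        have := hRB a ((Φ (𝓑 a))⁻¹ a⁻¹)
        rw [MulAut.apply_inv_self, mul_inv_cancel, h1] at this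
        exact this
      have hB : 𝓑 ((Φ (𝓑 a))⁻¹ a⁻¹) = (𝓑 a)⁻¹ := eq_inv_of_mul_eq_one_right key
      show (⟨(Φ (𝓑 a))⁻¹ a⁻¹, 𝓑 ((Φ (𝓑 a))⁻¹ a⁻¹)⟩ : H ⋊[Φ] G) = _
      rw [hB]
      ext
      · simp [SemidirectProduct.inv_left, map_inv]
      · simp [SemidirectProduct.inv_right]
  · rintro ⟨S, hS⟩ a b
    have ha : (⟨a, 𝓑 a⟩ : H ⋊[Φ] G) ∈ S := by rw [← SetLike.mem_coe, hS]; exact ⟨a, rfl⟩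
    have hb : (⟨b, 𝓑 b⟩ : H ⋊[Φ] G) ∈ S := by rw [← SetLike.mem_coe, hS]; exact ⟨b, rfl⟩
    have := S.mul_mem ha hb
    rw [← SetLike.mem_coe, hS] at this
    obtain ⟨c, hc⟩ := this
    have h1 : c = a * Φ (𝓑 a) b := congrArg SemidirectProduct.left hc
    have h2 : 𝓑 c = 𝓑 a * 𝓑 b := congrArg SemidirectProduct.right hc
    rw [h1] at h2
    exact h2.symm
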